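/- Let A be an associative algebra over a field and suppose series h(u) = 1 + Σ_{r≥1} h^{(r)}u^{-r} and e(u) = Σ_{r≥1} e^{(r)}u^{-r} satisfy (u-v)[h(u),e(v)] = -h(u)(e(u)-e(v)) (equivalently (u-v)[e(v),h(u)] = h(u)(e(u)-e(v))). Then e(u-1) h(u) = h(u) e(u), where e(u-1) denotes the series obtained by substituting u-1 for u. -/

import Mathlib

/-!
STATEMENT 11: Let `A` be an associative algebra over a field and
`h(u) = 1 + Σ_{r≥1} h^{(r)} u^{-r}`, `e(u) = Σ_{r≥1} e^{(r)} u^{-r}` series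
satisfying `(u - v)[h(u), e(v)] = -h(u)(e(u) - e(v))`.  Then
`e(u-1) h(u) = h(u) e(u)`, where `e(u-1)` is obtained by the substitution
`(u-1)^{-r} = Σ_{s≥0} choose (r+s-1) s * u^{-r-s}`.

Laurent convention: `(u - v) * S = T` is encoded as
`(v⁻¹ - u⁻¹) * S = u⁻¹ * v⁻¹ * T` in `MvPowerSeries (Fin 2) A`
(variable `0` is `u⁻¹`, variable `1` is `v⁻¹`).  The conclusion is a
one-variable identity, stated in `PowerSeries A` (variable `u⁻¹`).
-/

noncomputable section

/-- The series `Σ_{r} f^{(r)} u^{-r}` viewed in `A[[u⁻¹, v⁻¹]]`, where the first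
power-series variable (index `0`) plays the role of `u⁻¹` and the second
(index `1`) the role of `v⁻¹`. -/
def Useries {A : Type*} [Ring A] (f : ℕ → A) : MvPowerSeries (Fin 2) A :=
  fun d => if d 1 = 0 then f (d 0) else 0

/-- The series `Σ_{r} f^{(r)} v^{-r}` viewed in `A[[u⁻¹, v⁻¹]]`. -/
def Vseries {A : Type*} [Ring A] (f : ℕ → A) : MvPowerSeries (Fin 2) A :=
  fun d => if d 0 = 0 then f (d 1) else 0

/-- `u⁻¹` as an element of `A[[u⁻¹, v⁻¹]]`. -/
def Xu {A : Type*} [Ring A] : MvPowerSeries (Fin 2) A := MvPowerSeries.X 0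

/-- `v⁻¹` as an element of `A[[u⁻¹, v⁻¹]]`. -/
def Xv {A : Type*} [Ring A] : MvPowerSeries (Fin 2) A := MvPowerSeries.X 1

/-- Coefficients of the shifted series `f(u + c) = Σ_r f^{(r)} (u + c)^{-r}`,
via the expansion `(u+c)^{-r} = Σ_{s ≥ 0} (-c)^s * choose (r+s-1) s * u^{-r-s}`:
the coefficient of `u^{-m}` is `Σ_{r ≤ m} (-c)^{m-r} * choose (m-1) (m-r) * f r`. -/
def shiftCoeff {A : Type*} [Ring A] (c : ℤ) (f : ℕ → A) (m : ℕ) : A :=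
  ∑ r ∈ Finset.range (m + 1), ((-c) ^ (m - r) * (Nat.choose (m - 1) (m - r) : ℤ)) • f r

open Finset

namespace Stmt11Aux


lemma pascal' (B y : ℕ) :
    Nat.choose (B+1+(y+1)) (y+1) = Nat.choose (B+(y+1)) (y+1) + Nat.choose (B+1+y) y := by
  have h4 : B+1+(y+1) = (B+y+1)+1 := by omega
  have h5 : B+(y+1) = B+y+1 := by omega
  have h6 : B+1+y = B+y+1 := by omega
  rw [h4, h5, h6, Nat.choose_succ_succ']
  exact Nat.add_comm _ _

lemma hockey (a : ℕ) : ∀ t : ℕ, ∑ x ∈ range (t+1), Nat.choose (a+x) x = Nat.choose (a+1+t) t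
  | 0 => by simp
  | (t+1) => by
    rw [Finset.sum_range_succ, hockey a t]
    have h1 : a + 1 + (t + 1) = (a + t + 1) + 1 := by omega
    rw [h1, Nat.choose_succ_succ' (a+t+1) t]
    have h2 : a + 1 + t = a + t + 1 := by omega
    have h3 : a + (t + 1) = a + t + 1 := by omega
    rw [h2, h3]

lemma nbv (a : ℕ) : ∀ b t : ℕ,
    ∑ x ∈ range (t+1), Nat.choose (a+x) x * Nat.choose (b+(t-x)) (t-x)
      = Nat.choose (a+b+1+t) t
  | 0, t => by simpa using hockey a t
  | (b+1), 0 => by simp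
  | (b+1), (t+1) => by
    have key : ∀ x ∈ range (t+2),
        Nat.choose (a+x) x * Nat.choose (b+1+(t+1-x)) (t+1-x)
          = Nat.choose (a+x) x * Nat.choose (b+(t+1-x)) (t+1-x)
            + (if x ≤ t then Nat.choose (a+x) x * Nat.choose (b+1+(t-x)) (t-x) else 0) := by
      intro x hx
      rcases Nat.lt_or_ge x (t+1) with hxt | hxt
      · have hle : x ≤ t := by omega
        rw [if_pos hle]
        have hy : t + 1 - x = (t - x) + 1 := by omega
        rw [hy, pascal' b (t-x), mul_add]
      · have hx2 : x = t + 1 := by simp only [mem_range] at hx; omega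
        subst hx2
        simp
    rw [Finset.sum_congr rfl key, Finset.sum_add_distrib, nbv a b (t+1)]
    have htrim : ∑ x ∈ range (t+2),
        (if x ≤ t then Nat.choose (a+x) x * Nat.choose (b+1+(t-x)) (t-x) else 0)
        = ∑ x ∈ range (t+1), Nat.choose (a+x) x * Nat.choose (b+1+(t-x)) (t-x) := by
      rw [Finset.sum_range_succ, if_neg (by omega), add_zero]
      exact Finset.sum_congr rfl fun x hx => by
        rw [if_pos (by simp only [mem_range] at hx; omega)]
    rw [htrim, nbv a (b+1) t]
    have h7 : a + (b+1) + 1 + (t+1) = (a + b + 1 + (t+1)) + 1 := by omega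
    rw [h7, Nat.choose_succ_succ' (a + b + 1 + (t+1)) t]
    have h8 : a + (b+1) + 1 + t = a + b + 1 + (t + 1) := by omega
    rw [h8, Nat.add_comm]
  termination_by b t => (b, t)

/-- coefficient of `u^{-m}` in `u^{-a} (u-1)^{-b}`. -/
def cc (a b m : ℕ) : ℕ :=
  if b = 0 then (if m = a then 1 else 0)
  else if a + b ≤ m then Nat.choose (m - a - 1) (m - a - b) else 0

lemma cc_eq_zero {a b m : ℕ} (h : m < a + b) : cc a b m = 0 := by
  unfold cc
  split_ifs <;> omega

lemma cc_shift {i m : ℕ} (a b : ℕ) (him : i ≤ m) : cc (i + a) b m = cc a b (m - i) := by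
  unfold cc
  split_ifs <;> first | omega | (congr 1 <;> omega)

lemma sum_shift {M : Type*} [AddCommMonoid M] (G : ℕ → M) (i m : ℕ) (him : i ≤ m) :
    ∑ a ∈ range (m+1), (if i ≤ a then G (a - i) else 0) = ∑ x ∈ range (m - i + 1), G x := by
  rw [← Finset.sum_filter]
  have hf : filter (fun a => i ≤ a) (range (m+1)) = Ico i (m+1) := by
    ext x
    simp only [mem_filter, mem_range, mem_Ico]
    omega
  rw [hf, Finset.sum_Ico_eq_sum_range]
  have h2 : m + 1 - i = m - i + 1 := by omega
  rw [h2]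
  exact Finset.sum_congr rfl fun x _ => by rw [Nat.add_sub_cancel_left]

lemma sum_range_if {M : Type*} [AddCommMonoid M] (t : ℕ → M) {a m : ℕ} (h : a ≤ m) :
    ∑ i ∈ range (m+1), (if i ≤ a then t i else 0) = ∑ i ∈ range (a+1), t i := by
  rw [← Finset.sum_filter]
  congr 1
  ext i
  simp only [mem_filter, mem_range]
  omega

lemma cc_conv (l a b m : ℕ) :
    ∑ m1 ∈ range (m+1), cc 0 l m1 * cc a b (m - m1) = cc a (l + b) m := by
  rcases Nat.eq_zero_or_pos l with hl | hl
  · subst hl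
    have h0 : ∀ m1 ∈ range (m+1), cc 0 0 m1 * cc a b (m - m1)
        = if m1 = 0 then cc a b m else 0 := by
      intro m1 _
      by_cases h0 : m1 = 0
      · subst h0
        simp [cc]
      · have : cc 0 0 m1 = 0 := by unfold cc; split_ifs <;> omega
        rw [this, zero_mul, if_neg h0]
    rw [Finset.sum_congr rfl h0, Finset.sum_ite_eq' (range (m+1)) 0]
    simp
  · -- l ≥ 1
    by_cases hm : a + b + l ≤ m
    · -- main case
      have step1 : ∀ m1 ∈ range (m+1), cc 0 l m1 * cc a b (m - m1)
          = if l ≤ m1 then Nat.choose (l + (m1 - l) - 1) (m1 - l) * cc a b (m - l - (m1 - l)) else 0 := by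
        intro m1 _
        by_cases hlm : l ≤ m1
        · rw [if_pos hlm]
          have hcc : cc 0 l m1 = Nat.choose (l + (m1 - l) - 1) (m1 - l) := by
            unfold cc
            rw [if_neg (by omega), if_pos (by omega)]
            congr 1 <;> omega
          rw [hcc]
          have harg : m - m1 = m - l - (m1 - l) := by omega
          rw [harg]
        · rw [if_neg hlm, cc_eq_zero (show m1 < 0 + l by omega), zero_mul]
      rw [Finset.sum_congr rfl step1,
        sum_shift (fun x => Nat.choose (l + x - 1) x * cc a b (m - l - x)) l m (by omega)]
      rcases Nat.eq_zero_or_pos b with hb | hb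
      · -- b = 0
        subst hb
        have step2 : ∀ x ∈ range (m - l + 1), Nat.choose (l + x - 1) x * cc a 0 (m - l - x)
            = if x = m - l - a then Nat.choose (m - a - 1) (m - a - l) else 0 := by
          intro x hx
          simp only [mem_range] at hx
          by_cases hxa : x = m - l - a
          · rw [if_pos hxa]
            have hcc : cc a 0 (m - l - x) = 1 := by
              unfold cc
              rw [if_pos rfl, if_pos (by omega)]
            rw [hcc, mul_one]
            congr 1 <;> omega
          · rw [if_neg hxa]
            have hcc : cc a 0 (m - l - x) = 0 := by
              unfold cc
              rw [if_pos rfl, if_neg (by omega)]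
            rw [hcc, mul_zero]
        rw [Finset.sum_congr rfl step2, Finset.sum_ite_eq' (range (m - l + 1)) (m - l - a)]
        rw [if_pos (by simp only [mem_range]; omega)]
        have htarget : cc a (l + 0) m = Nat.choose (m - a - 1) (m - a - l) := by
          unfold cc
          rw [if_neg (by omega), if_pos (by omega)]
          congr 1
        exact htarget.symm
      · -- b ≥ 1
        have step2 : ∀ x ∈ range (m - l + 1), Nat.choose (l + x - 1) x * cc a b (m - l - x)
            = if x ≤ m - l - a - b then
                Nat.choose (l - 1 + x) x * Nat.choose (b - 1 + ((m - l - a - b) - x)) ((m - l - a - b) - x)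
              else 0 := by
          intro x hx
          simp only [mem_range] at hx
          by_cases hxt : x ≤ m - l - a - b
          · rw [if_pos hxt]
            have hcc : cc a b (m - l - x)
                = Nat.choose (b - 1 + ((m - l - a - b) - x)) ((m - l - a - b) - x) := by
              unfold cc
              rw [if_neg (by omega), if_pos (by omega)]
              congr 1 <;> omega
            rw [hcc]
            congr 2
            omega
          · rw [if_neg hxt, cc_eq_zero (show m - l - x < a + b by omega), mul_zero]
        rw [Finset.sum_congr rfl step2, sum_range_if _ (by omega), nbv (l-1) (b-1) (m - l - a - b)]
        unfold cc
        rw [if_neg (by omega), if_pos (by omega)]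
        congr 1 <;> omega
    · -- degenerate: everything is 0
      have hz : ∀ m1 ∈ range (m+1), cc 0 l m1 * cc a b (m - m1) = 0 := by
        intro m1 hm1
        simp only [mem_range] at hm1
        by_cases hlm : l ≤ m1
        · rw [cc_eq_zero (show m - m1 < a + b by omega), mul_zero]
        · rw [cc_eq_zero (show m1 < 0 + l by omega), zero_mul]
      rw [Finset.sum_congr rfl hz, Finset.sum_const_zero, cc_eq_zero (by omega)]



variable {A : Type*} [Ring A]

def pad (a b : ℕ) : Fin 2 →₀ ℕ := Finsupp.single 0 a + Finsupp.single 1 b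

@[simp] lemma single0_apply0 (i : ℕ) : (Finsupp.single (0 : Fin 2) i) 0 = i :=
  Finsupp.single_eq_same

@[simp] lemma single0_apply1 (i : ℕ) : (Finsupp.single (0 : Fin 2) i) 1 = 0 :=
  Finsupp.single_eq_of_ne (by decide)

@[simp] lemma single1_apply0 (i : ℕ) : (Finsupp.single (1 : Fin 2) i) 0 = 0 :=
  Finsupp.single_eq_of_ne (by decide)

@[simp] lemma single1_apply1 (i : ℕ) : (Finsupp.single (1 : Fin 2) i) 1 = i :=
  Finsupp.single_eq_same

@[simp] lemma pad_apply_zero (a b : ℕ) : pad a b 0 = a := by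
  simp [pad]

@[simp] lemma pad_apply_one (a b : ℕ) : pad a b 1 = b := by
  simp [pad]

lemma fin2_ext {g1 g2 : Fin 2 →₀ ℕ} (h0 : g1 0 = g2 0) (h1 : g1 1 = g2 1) : g1 = g2 :=
  Finsupp.ext (Fin.forall_fin_two.2 ⟨h0, h1⟩)

lemma fin2_le {g1 g2 : Fin 2 →₀ ℕ} (h0 : g1 0 ≤ g2 0) (h1 : g1 1 ≤ g2 1) : g1 ≤ g2 :=
  Finsupp.le_def.2 (Fin.forall_fin_two.2 ⟨h0, h1⟩)

@[simp] lemma coeff_Useries (f : ℕ → A) (d : Fin 2 →₀ ℕ) :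
    MvPowerSeries.coeff d (Useries f) = if d 1 = 0 then f (d 0) else 0 := rfl

@[simp] lemma coeff_Vseries (f : ℕ → A) (d : Fin 2 →₀ ℕ) :
    MvPowerSeries.coeff d (Vseries f) = if d 0 = 0 then f (d 1) else 0 := rfl

lemma coeff_U_mul (f : ℕ → A) (S : MvPowerSeries (Fin 2) A) (d : Fin 2 →₀ ℕ) :
    MvPowerSeries.coeff d (Useries f * S)
      = ∑ i ∈ range (d 0 + 1), f i * MvPowerSeries.coeff (pad (d 0 - i) (d 1)) S := by
  rw [MvPowerSeries.coeff_mul]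
  have hside : ∀ p ∈ antidiagonal d,
      MvPowerSeries.coeff p.1 (Useries f) * MvPowerSeries.coeff p.2 S ≠ 0 → p.1 1 = 0 := by
    intro p _ hne
    by_contra hc
    apply hne
    rw [coeff_Useries, if_neg hc, zero_mul]
  rw [← Finset.sum_filter_of_ne hside]
  refine Finset.sum_nbij' (fun p => p.1 0)
    (fun i => (Finsupp.single 0 i, d - Finsupp.single 0 i)) ?_ ?_ ?_ ?_ ?_
  · intro p hp
    simp only [mem_filter, Finset.HasAntidiagonal.mem_antidiagonal] at hp
    have h0 : p.1 0 + p.2 0 = d 0 := by rw [← Finsupp.add_apply, hp.1]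
    simp only [mem_range]
    omega
  · intro i hi
    simp only [mem_range] at hi
    have hle : Finsupp.single (0 : Fin 2) i ≤ d := fin2_le (by simpa using by omega) (by simp)
    simp only [mem_filter, Finset.HasAntidiagonal.mem_antidiagonal]
    exact ⟨add_tsub_cancel_of_le hle, by simp⟩
  · intro p hp
    simp only [mem_filter, Finset.HasAntidiagonal.mem_antidiagonal] at hp
    have h1 : Finsupp.single (0 : Fin 2) (p.1 0) = p.1 :=
      fin2_ext (by simp) (by simp [hp.2])
    have h2 : d - Finsupp.single (0 : Fin 2) (p.1 0) = p.2 := by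
      rw [h1]
      have hc : p.2 + p.1 = d := by rw [add_comm]; exact hp.1
      exact (eq_tsub_of_add_eq hc).symm
    exact Prod.ext h1 h2
  · intro i _
    simp
  · intro p hp
    simp only [mem_filter, Finset.HasAntidiagonal.mem_antidiagonal] at hp
    have h0 : p.1 0 + p.2 0 = d 0 := by rw [← Finsupp.add_apply, hp.1]
    have h1 : p.1 1 + p.2 1 = d 1 := by rw [← Finsupp.add_apply, hp.1]
    have hp2 : p.2 = pad (d 0 - p.1 0) (d 1) :=
      fin2_ext (by simp only [pad_apply_zero]; omega) (by simp only [pad_apply_one]; omega)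
    rw [coeff_Useries, if_pos hp.2, ← hp2]

lemma coeff_mul_U (f : ℕ → A) (S : MvPowerSeries (Fin 2) A) (d : Fin 2 →₀ ℕ) :
    MvPowerSeries.coeff d (S * Useries f)
      = ∑ i ∈ range (d 0 + 1), MvPowerSeries.coeff (pad (d 0 - i) (d 1)) S * f i := by
  rw [MvPowerSeries.coeff_mul]
  have hside : ∀ p ∈ antidiagonal d,
      MvPowerSeries.coeff p.1 S * MvPowerSeries.coeff p.2 (Useries f) ≠ 0 → p.2 1 = 0 := by
    intro p _ hne
    by_contra hc
    apply hne
    rw [coeff_Useries, if_neg hc, mul_zero]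
  rw [← Finset.sum_filter_of_ne hside]
  refine Finset.sum_nbij' (fun p => p.2 0)
    (fun i => (d - Finsupp.single 0 i, Finsupp.single 0 i)) ?_ ?_ ?_ ?_ ?_
  · intro p hp
    simp only [mem_filter, Finset.HasAntidiagonal.mem_antidiagonal] at hp
    have h0 : p.1 0 + p.2 0 = d 0 := by rw [← Finsupp.add_apply, hp.1]
    simp only [mem_range]
    omega
  · intro i hi
    simp only [mem_range] at hi
    have hle : Finsupp.single (0 : Fin 2) i ≤ d := fin2_le (by simpa using by omega) (by simp)
    simp only [mem_filter, Finset.HasAntidiagonal.mem_antidiagonal]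
    refine ⟨?_, by simp⟩
    rw [tsub_add_cancel_of_le hle]
  · intro p hp
    simp only [mem_filter, Finset.HasAntidiagonal.mem_antidiagonal] at hp
    have h1 : Finsupp.single (0 : Fin 2) (p.2 0) = p.2 :=
      fin2_ext (by simp) (by simp [hp.2])
    have h2 : d - Finsupp.single (0 : Fin 2) (p.2 0) = p.1 := by
      rw [h1]
      exact (eq_tsub_of_add_eq hp.1).symm
    exact Prod.ext h2 h1
  · intro i _
    simp
  · intro p hp
    simp only [mem_filter, Finset.HasAntidiagonal.mem_antidiagonal] at hp
    have h0 : p.1 0 + p.2 0 = d 0 := by rw [← Finsupp.add_apply, hp.1]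
    have h1 : p.1 1 + p.2 1 = d 1 := by rw [← Finsupp.add_apply, hp.1]
    have hp1 : p.1 = pad (d 0 - p.2 0) (d 1) :=
      fin2_ext (by simp only [pad_apply_zero]; omega) (by simp only [pad_apply_one]; omega)
    rw [coeff_Useries, if_pos hp.2, ← hp1]

lemma coeff_V_mul (f : ℕ → A) (S : MvPowerSeries (Fin 2) A) (d : Fin 2 →₀ ℕ) :
    MvPowerSeries.coeff d (Vseries f * S)
      = ∑ l ∈ range (d 1 + 1), f l * MvPowerSeries.coeff (pad (d 0) (d 1 - l)) S := by
  rw [MvPowerSeries.coeff_mul]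
  have hside : ∀ p ∈ antidiagonal d,
      MvPowerSeries.coeff p.1 (Vseries f) * MvPowerSeries.coeff p.2 S ≠ 0 → p.1 0 = 0 := by
    intro p _ hne
    by_contra hc
    apply hne
    rw [coeff_Vseries, if_neg hc, zero_mul]
  rw [← Finset.sum_filter_of_ne hside]
  refine Finset.sum_nbij' (fun p => p.1 1)
    (fun l => (Finsupp.single 1 l, d - Finsupp.single 1 l)) ?_ ?_ ?_ ?_ ?_
  · intro p hp
    simp only [mem_filter, Finset.HasAntidiagonal.mem_antidiagonal] at hp
    have h1 : p.1 1 + p.2 1 = d 1 := by rw [← Finsupp.add_apply, hp.1]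
    simp only [mem_range]
    omega
  · intro l hl
    simp only [mem_range] at hl
    have hle : Finsupp.single (1 : Fin 2) l ≤ d := fin2_le (by simp) (by simpa using by omega)
    simp only [mem_filter, Finset.HasAntidiagonal.mem_antidiagonal]
    exact ⟨add_tsub_cancel_of_le hle, by simp⟩
  · intro p hp
    simp only [mem_filter, Finset.HasAntidiagonal.mem_antidiagonal] at hp
    have h1 : Finsupp.single (1 : Fin 2) (p.1 1) = p.1 :=
      fin2_ext (by simp [hp.2]) (by simp)
    have h2 : d - Finsupp.single (1 : Fin 2) (p.1 1) = p.2 := by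
      rw [h1]
      have hc : p.2 + p.1 = d := by rw [add_comm]; exact hp.1
      exact (eq_tsub_of_add_eq hc).symm
    exact Prod.ext h1 h2
  · intro l _
    simp
  · intro p hp
    simp only [mem_filter, Finset.HasAntidiagonal.mem_antidiagonal] at hp
    have h0 : p.1 0 + p.2 0 = d 0 := by rw [← Finsupp.add_apply, hp.1]
    have h1 : p.1 1 + p.2 1 = d 1 := by rw [← Finsupp.add_apply, hp.1]
    have hp2 : p.2 = pad (d 0) (d 1 - p.1 1) :=
      fin2_ext (by simp only [pad_apply_zero]; omega) (by simp only [pad_apply_one]; omega)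
    rw [coeff_Vseries, if_pos hp.2, ← hp2]


def co (S : MvPowerSeries (Fin 2) A) (a b : ℕ) : A := MvPowerSeries.coeff (pad a b) S


lemma co_U_mul (f : ℕ → A) (S : MvPowerSeries (Fin 2) A) (a b : ℕ) :
    co (Useries f * S) a b = ∑ i ∈ range (a + 1), f i * co S (a - i) b := by
  have h := coeff_U_mul f S (pad a b)
  rw [pad_apply_zero, pad_apply_one] at h
  exact h

lemma co_mul_U (f : ℕ → A) (S : MvPowerSeries (Fin 2) A) (a b : ℕ) :
    co (S * Useries f) a b = ∑ i ∈ range (a + 1), co S (a - i) b * f i := by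
  have h := coeff_mul_U f S (pad a b)
  rw [pad_apply_zero, pad_apply_one] at h
  exact h

lemma co_V_mul (f : ℕ → A) (S : MvPowerSeries (Fin 2) A) (a b : ℕ) :
    co (Vseries f * S) a b = ∑ l ∈ range (b + 1), f l * co S a (b - l) := by
  have h := coeff_V_mul f S (pad a b)
  rw [pad_apply_zero, pad_apply_one] at h
  exact h

/-- The substitution map `u⁻¹ ↦ u⁻¹`, `v⁻¹ ↦ (u-1)⁻¹` on coefficients. -/
def Phi (F : MvPowerSeries (Fin 2) A) : PowerSeries A :=
  PowerSeries.mk fun m => ∑ a ∈ range (m+1), ∑ b ∈ range (m+1), cc a b m • co F a b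

/-- shifted series coefficients -/
def sh (f : ℕ → A) (n : ℕ) : A := ∑ l ∈ range (n+1), cc 0 l n • f l

lemma Phi_sub (F G : MvPowerSeries (Fin 2) A) : Phi (F - G) = Phi F - Phi G := by
  ext m
  simp only [Phi, PowerSeries.coeff_mk, map_sub, co, smul_sub, Finset.sum_sub_distrib]

lemma Phi_neg (F : MvPowerSeries (Fin 2) A) : Phi (-F) = -Phi F := by
  ext m
  simp only [Phi, PowerSeries.coeff_mk, map_neg, co, smul_neg, Finset.sum_neg_distrib]

lemma Phi_one : Phi (1 : MvPowerSeries (Fin 2) A) = 1 := by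
  ext m
  simp only [Phi, PowerSeries.coeff_mk, co, MvPowerSeries.coeff_one]
  rw [Finset.sum_eq_single_of_mem 0 (by simp)]
  · rw [Finset.sum_eq_single_of_mem 0 (by simp)]
    · have hp : pad 0 0 = 0 := fin2_ext (by simp [pad_apply_zero]) (by simp [pad_apply_one])
      rw [if_pos hp]
      have hcc : cc 0 0 m = if m = 0 then 1 else 0 := by
        unfold cc
        simp
      rw [hcc, PowerSeries.coeff_one]
      by_cases hm : m = 0 <;> simp [hm]
    · intro b _ hb
      have : pad 0 b ≠ 0 := by
        intro hc
        apply hb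
        have := congrArg (fun g : Fin 2 →₀ ℕ => g 1) hc
        simpa [pad_apply_one] using this
      rw [if_neg this, smul_zero]
  · intro a _ ha
    apply Finset.sum_eq_zero
    intro b _
    have : pad a b ≠ 0 := by
      intro hc
      apply ha
      have := congrArg (fun g : Fin 2 →₀ ℕ => g 0) hc
      simpa [pad_apply_zero] using this
    rw [if_neg this, smul_zero]

lemma Phi_U_mul (f : ℕ → A) (S : MvPowerSeries (Fin 2) A) :
    Phi (Useries f * S) = PowerSeries.mk f * Phi S := by
  ext m
  rw [PowerSeries.coeff_mul, Finset.Nat.sum_antidiagonal_eq_sum_range_succ_mk]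
  simp only [Phi, PowerSeries.coeff_mk, co_U_mul]
  calc
    ∑ a ∈ range (m+1), ∑ b ∈ range (m+1), cc a b m • ∑ i ∈ range (a+1), f i * co S (a-i) b
      = ∑ a ∈ range (m+1), ∑ b ∈ range (m+1), ∑ i ∈ range (m+1),
          (if i ≤ a then cc a b m • (f i * co S (a-i) b) else 0) := by
        refine Finset.sum_congr rfl fun a ha => Finset.sum_congr rfl fun b _ => ?_
        rw [Finset.smul_sum]
        exact (sum_range_if (fun i => cc a b m • (f i * co S (a-i) b))
          (by simp only [mem_range] at ha; omega)).symm
    _ = ∑ a ∈ range (m+1), ∑ i ∈ range (m+1), ∑ b ∈ range (m+1),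
          (if i ≤ a then cc a b m • (f i * co S (a-i) b) else 0) :=
        Finset.sum_congr rfl fun a _ => Finset.sum_comm
    _ = ∑ i ∈ range (m+1), ∑ a ∈ range (m+1), ∑ b ∈ range (m+1),
          (if i ≤ a then cc a b m • (f i * co S (a-i) b) else 0) := Finset.sum_comm
    _ = ∑ i ∈ range (m+1), ∑ x ∈ range (m - i + 1), ∑ b ∈ range (m+1),
          cc (i+x) b m • (f i * co S x b) := by
        refine Finset.sum_congr rfl fun i hi => ?_
        have him : i ≤ m := by simp only [mem_range] at hi; omega
        rw [← sum_shift (fun x => ∑ b ∈ range (m+1), cc (i+x) b m • (f i * co S x b)) i m him]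
        refine Finset.sum_congr rfl fun a _ => ?_
        by_cases h : i ≤ a
        · simp only [if_pos h]
          rw [Nat.add_sub_cancel' h]
        · simp only [if_neg h, Finset.sum_const_zero]
    _ = ∑ i ∈ range (m+1), ∑ x ∈ range (m - i + 1), ∑ b ∈ range (m - i + 1),
          cc x b (m-i) • (f i * co S x b) := by
        refine Finset.sum_congr rfl fun i hi => Finset.sum_congr rfl fun x _ => ?_
        have him : i ≤ m := by simp only [mem_range] at hi; omega
        simp only [cc_shift _ _ him]
        refine (Finset.sum_subset (Finset.range_subset_range.2 (by omega)) ?_).symm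
        intro b _ hb
        simp only [mem_range, not_lt] at hb
        rw [cc_eq_zero (by omega), zero_smul]
    _ = ∑ i ∈ range (m+1), f i * ∑ x ∈ range (m - i + 1), ∑ b ∈ range (m - i + 1),
          cc x b (m-i) • co S x b := by
        refine Finset.sum_congr rfl fun i _ => ?_
        rw [Finset.mul_sum]
        refine Finset.sum_congr rfl fun x _ => ?_
        rw [Finset.mul_sum]
        exact Finset.sum_congr rfl fun b _ => (mul_smul_comm _ _ _).symm

lemma Phi_mul_U (f : ℕ → A) (S : MvPowerSeries (Fin 2) A) :
    Phi (S * Useries f) = Phi S * PowerSeries.mk f := by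
  ext m
  rw [PowerSeries.coeff_mul, Finset.Nat.sum_antidiagonal_eq_sum_range_succ_mk,
    ← Finset.sum_range_reflect]
  simp only [Nat.add_sub_cancel, Phi, PowerSeries.coeff_mk, co_mul_U]
  calc
    ∑ a ∈ range (m+1), ∑ b ∈ range (m+1), cc a b m • ∑ i ∈ range (a+1), co S (a-i) b * f i
      = ∑ a ∈ range (m+1), ∑ b ∈ range (m+1), ∑ i ∈ range (m+1),
          (if i ≤ a then cc a b m • (co S (a-i) b * f i) else 0) := by
        refine Finset.sum_congr rfl fun a ha => Finset.sum_congr rfl fun b _ => ?_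
        rw [Finset.smul_sum]
        exact (sum_range_if (fun i => cc a b m • (co S (a-i) b * f i))
          (by simp only [mem_range] at ha; omega)).symm
    _ = ∑ a ∈ range (m+1), ∑ i ∈ range (m+1), ∑ b ∈ range (m+1),
          (if i ≤ a then cc a b m • (co S (a-i) b * f i) else 0) :=
        Finset.sum_congr rfl fun a _ => Finset.sum_comm
    _ = ∑ i ∈ range (m+1), ∑ a ∈ range (m+1), ∑ b ∈ range (m+1),
          (if i ≤ a then cc a b m • (co S (a-i) b * f i) else 0) := Finset.sum_comm
    _ = ∑ i ∈ range (m+1), ∑ x ∈ range (m - i + 1), ∑ b ∈ range (m+1),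
          cc (i+x) b m • (co S x b * f i) := by
        refine Finset.sum_congr rfl fun i hi => ?_
        have him : i ≤ m := by simp only [mem_range] at hi; omega
        rw [← sum_shift (fun x => ∑ b ∈ range (m+1), cc (i+x) b m • (co S x b * f i)) i m him]
        refine Finset.sum_congr rfl fun a _ => ?_
        by_cases h : i ≤ a
        · simp only [if_pos h]
          rw [Nat.add_sub_cancel' h]
        · simp only [if_neg h, Finset.sum_const_zero]
    _ = ∑ i ∈ range (m+1), ∑ x ∈ range (m - i + 1), ∑ b ∈ range (m - i + 1),
          cc x b (m-i) • (co S x b * f i) := by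
        refine Finset.sum_congr rfl fun i hi => Finset.sum_congr rfl fun x _ => ?_
        have him : i ≤ m := by simp only [mem_range] at hi; omega
        simp only [cc_shift _ _ him]
        refine (Finset.sum_subset (Finset.range_subset_range.2 (by omega)) ?_).symm
        intro b _ hb
        simp only [mem_range, not_lt] at hb
        rw [cc_eq_zero (by omega), zero_smul]
    _ = ∑ i ∈ range (m+1), (∑ x ∈ range (m - i + 1), ∑ b ∈ range (m - i + 1),
          cc x b (m-i) • co S x b) * f i := by
        refine Finset.sum_congr rfl fun i _ => ?_
        rw [Finset.sum_mul]
        refine Finset.sum_congr rfl fun x _ => ?_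
        rw [Finset.sum_mul]
        exact Finset.sum_congr rfl fun b _ => (smul_mul_assoc _ _ _).symm
    _ = ∑ i ∈ range (m+1), (∑ x ∈ range ((m-i) + 1), ∑ b ∈ range ((m-i)+1),
          cc x b (m-i) • co S x b) * f (m - (m - i)) := by
        refine Finset.sum_congr rfl fun i hi => ?_
        have him : i ≤ m := by simp only [mem_range] at hi; omega
        rw [Nat.sub_sub_self him]

lemma Phi_V_mul (f : ℕ → A) (S : MvPowerSeries (Fin 2) A) :
    Phi (Vseries f * S) = PowerSeries.mk (sh f) * Phi S := by
  ext m
  rw [PowerSeries.coeff_mul, Finset.Nat.sum_antidiagonal_eq_sum_range_succ_mk]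
  simp only [Phi, PowerSeries.coeff_mk, co_V_mul, sh]
  calc
    ∑ a ∈ range (m+1), ∑ b ∈ range (m+1), cc a b m • ∑ l ∈ range (b+1), f l * co S a (b-l)
      = ∑ a ∈ range (m+1), ∑ b ∈ range (m+1), ∑ l ∈ range (m+1),
          (if l ≤ b then cc a b m • (f l * co S a (b-l)) else 0) := by
        refine Finset.sum_congr rfl fun a _ => Finset.sum_congr rfl fun b hb => ?_
        rw [Finset.smul_sum]
        exact (sum_range_if (fun l => cc a b m • (f l * co S a (b-l)))
          (by simp only [mem_range] at hb; omega)).symm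
    _ = ∑ a ∈ range (m+1), ∑ l ∈ range (m+1), ∑ b ∈ range (m+1),
          (if l ≤ b then cc a b m • (f l * co S a (b-l)) else 0) :=
        Finset.sum_congr rfl fun a _ => Finset.sum_comm
    _ = ∑ l ∈ range (m+1), ∑ a ∈ range (m+1), ∑ b ∈ range (m+1),
          (if l ≤ b then cc a b m • (f l * co S a (b-l)) else 0) := Finset.sum_comm
    _ = ∑ l ∈ range (m+1), ∑ a ∈ range (m+1), ∑ y ∈ range (m - l + 1),
          cc a (l+y) m • (f l * co S a y) := by
        refine Finset.sum_congr rfl fun l hl => Finset.sum_congr rfl fun a _ => ?_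
        have hlm : l ≤ m := by simp only [mem_range] at hl; omega
        rw [← sum_shift (fun y => cc a (l+y) m • (f l * co S a y)) l m hlm]
        refine Finset.sum_congr rfl fun b _ => ?_
        by_cases h : l ≤ b
        · simp only [if_pos h]
          rw [Nat.add_sub_cancel' h]
        · simp only [if_neg h]
    _ = ∑ l ∈ range (m+1), ∑ a ∈ range (m+1), ∑ y ∈ range (m+1),
          cc a (l+y) m • (f l * co S a y) := by
        refine Finset.sum_congr rfl fun l _ => Finset.sum_congr rfl fun a _ => ?_
        refine Finset.sum_subset (Finset.range_subset_range.2 (by omega)) ?_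
        intro y _ hy
        simp only [mem_range, not_lt] at hy
        rw [cc_eq_zero (by omega), zero_smul]
    _ = ∑ l ∈ range (m+1), ∑ a ∈ range (m+1), ∑ y ∈ range (m+1), ∑ m1 ∈ range (m+1),
          (cc 0 l m1 * cc a y (m - m1)) • (f l * co S a y) := by
        refine Finset.sum_congr rfl fun l _ => Finset.sum_congr rfl fun a _ =>
          Finset.sum_congr rfl fun y _ => ?_
        rw [← cc_conv l a y m, Finset.sum_smul]
    _ = ∑ l ∈ range (m+1), ∑ a ∈ range (m+1), ∑ m1 ∈ range (m+1), ∑ y ∈ range (m+1),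
          (cc 0 l m1 * cc a y (m - m1)) • (f l * co S a y) :=
        Finset.sum_congr rfl fun l _ => Finset.sum_congr rfl fun a _ => Finset.sum_comm
    _ = ∑ l ∈ range (m+1), ∑ m1 ∈ range (m+1), ∑ a ∈ range (m+1), ∑ y ∈ range (m+1),
          (cc 0 l m1 * cc a y (m - m1)) • (f l * co S a y) :=
        Finset.sum_congr rfl fun l _ => Finset.sum_comm
    _ = ∑ m1 ∈ range (m+1), ∑ l ∈ range (m+1), ∑ a ∈ range (m+1), ∑ y ∈ range (m+1),
          (cc 0 l m1 * cc a y (m - m1)) • (f l * co S a y) := Finset.sum_comm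
    _ = ∑ m1 ∈ range (m+1), (∑ l ∈ range (m1+1), cc 0 l m1 • f l) *
          ∑ a ∈ range (m - m1 + 1), ∑ y ∈ range (m - m1 + 1), cc a y (m - m1) • co S a y := by
        refine Finset.sum_congr rfl fun m1 hm1 => ?_
        have hm1m : m1 ≤ m := by simp only [mem_range] at hm1; omega
        rw [Finset.sum_mul]
        have hgrow : ∑ l ∈ range (m1+1), (cc 0 l m1 • f l) *
              (∑ a ∈ range (m - m1 + 1), ∑ y ∈ range (m - m1 + 1), cc a y (m - m1) • co S a y)
            = ∑ l ∈ range (m+1), (cc 0 l m1 • f l) *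
              (∑ a ∈ range (m - m1 + 1), ∑ y ∈ range (m - m1 + 1), cc a y (m - m1) • co S a y) := by
          refine Finset.sum_subset (Finset.range_subset_range.2 (by omega)) ?_
          intro l _ hl
          simp only [mem_range, not_lt] at hl
          rw [cc_eq_zero (show m1 < 0 + l by omega), zero_smul, zero_mul]
        rw [hgrow]
        refine (Finset.sum_congr rfl fun l _ => ?_).symm
        have hgrowa : ∑ a ∈ range (m+1), ∑ y ∈ range (m+1),
              (cc 0 l m1 * cc a y (m - m1)) • (f l * co S a y)
            = ∑ a ∈ range (m - m1 + 1), ∑ y ∈ range (m - m1 + 1),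
              (cc 0 l m1 * cc a y (m - m1)) • (f l * co S a y) := by
          have h1 : ∑ a ∈ range (m - m1 + 1), ∑ y ∈ range (m+1),
                (cc 0 l m1 * cc a y (m - m1)) • (f l * co S a y)
              = ∑ a ∈ range (m+1), ∑ y ∈ range (m+1),
                (cc 0 l m1 * cc a y (m - m1)) • (f l * co S a y) := by
            refine Finset.sum_subset (Finset.range_subset_range.2 (by omega)) ?_
            intro a _ ha
            simp only [mem_range, not_lt] at ha
            refine Finset.sum_eq_zero fun y _ => ?_
            rw [cc_eq_zero (show m - m1 < a + y by omega), mul_zero, zero_smul]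
          rw [← h1]
          refine Finset.sum_congr rfl fun a _ => ?_
          refine (Finset.sum_subset (Finset.range_subset_range.2 (by omega)) ?_).symm
          intro y _ hy
          simp only [mem_range, not_lt] at hy
          rw [cc_eq_zero (show m - m1 < a + y by omega), mul_zero, zero_smul]
        rw [hgrowa, Finset.mul_sum]
        refine Finset.sum_congr rfl fun a _ => ?_
        rw [Finset.mul_sum]
        refine Finset.sum_congr rfl fun y _ => ?_
        rw [smul_mul_assoc, mul_smul_comm, smul_smul]


def delta1 : ℕ → A := fun n => if n = 1 then 1 else 0

lemma U_delta1 : Useries (delta1 : ℕ → A) = Xu := by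
  apply MvPowerSeries.ext
  intro d
  rw [Xu, MvPowerSeries.coeff_X, coeff_Useries]
  by_cases h1 : d 1 = 0
  · by_cases h0 : d 0 = 1
    · rw [if_pos h1]
      have hd : d = Finsupp.single (0 : Fin 2) 1 :=
        fin2_ext (h0.trans (single0_apply0 1).symm) (h1.trans (single0_apply1 1).symm)
      rw [if_pos hd, delta1, if_pos h0]
    · rw [if_pos h1, delta1, if_neg h0, if_neg]
      intro hc
      exact h0 (by rw [hc, single0_apply0])
  · rw [if_neg h1, if_neg]
    intro hc
    exact h1 (by rw [hc, single0_apply1])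

lemma V_delta1 : Vseries (delta1 : ℕ → A) = Xv := by
  apply MvPowerSeries.ext
  intro d
  rw [Xv, MvPowerSeries.coeff_X, coeff_Vseries]
  by_cases h0 : d 0 = 0
  · by_cases h1 : d 1 = 1
    · rw [if_pos h0]
      have hd : d = Finsupp.single (1 : Fin 2) 1 :=
        fin2_ext (h0.trans (single1_apply0 1).symm) (h1.trans (single1_apply1 1).symm)
      rw [if_pos hd, delta1, if_pos h1]
    · rw [if_pos h0, delta1, if_neg h1, if_neg]
      intro hc
      exact h1 (by rw [hc, single1_apply1])
  · rw [if_neg h0, if_neg]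
    intro hc
    exact h0 (by rw [hc, single1_apply0])

lemma mk_delta1 : PowerSeries.mk (delta1 : ℕ → A) = PowerSeries.X := by
  ext n
  rw [PowerSeries.coeff_mk, PowerSeries.coeff_X]
  rfl

def Jf : ℕ → A := fun n => if n = 0 then 0 else 1

lemma sh_delta1 : sh (delta1 : ℕ → A) = Jf := by
  funext n
  cases n with
  | zero =>
    rw [sh, Finset.sum_range_one]
    have h1 : (delta1 : ℕ → A) 0 = 0 := rfl
    rw [h1, smul_zero]
    rfl
  | succ n =>
    rw [sh, Finset.sum_eq_single_of_mem 1 (by simp only [mem_range]; omega)]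
    · have h1 : (delta1 : ℕ → A) 1 = 1 := rfl
      have h2 : cc 0 1 (n+1) = 1 := by
        unfold cc
        rw [if_neg (by omega), if_pos (by omega)]
        simp
      rw [h1, h2, one_smul]
      rfl
    · intro l _ hl
      have h1 : (delta1 : ℕ → A) l = 0 := by rw [delta1]; simp [hl]
      rw [h1, smul_zero]

lemma sh_eq_shiftCoeff (f : ℕ → A) : sh f = shiftCoeff (-1) f := by
  funext n
  rw [sh, shiftCoeff]
  refine Finset.sum_congr rfl fun r hr => ?_
  simp only [mem_range] at hr
  rw [neg_neg, one_pow, one_mul, natCast_zsmul]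
  congr 1
  rcases Nat.eq_zero_or_pos r with hr0 | hr0
  · subst hr0
    rcases Nat.eq_zero_or_pos n with hn0 | hn0
    · subst hn0
      rfl
    · have h1 : cc 0 0 n = 0 := by unfold cc; rw [if_pos rfl, if_neg (by omega)]
      rw [h1, Nat.sub_zero, Nat.choose_eq_zero_of_lt (by omega)]
  · unfold cc
    rw [if_neg (by omega), if_pos (by omega)]
    simp only [Nat.sub_zero]

def Jser : PowerSeries A := PowerSeries.mk Jf

lemma X_mul_J : (PowerSeries.X : PowerSeries A) * Jser = Jser - PowerSeries.X := by
  ext n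
  cases n with
  | zero =>
    rw [PowerSeries.coeff_mul]
    simp [Jser, Jf, PowerSeries.coeff_X]
  | succ n =>
    rw [PowerSeries.coeff_succ_X_mul, map_sub]
    simp only [Jser, PowerSeries.coeff_mk, PowerSeries.coeff_X, Jf]
    cases n with
    | zero => simp
    | succ m => simp

lemma X_cancel {S T : PowerSeries A} (h : PowerSeries.X * S = PowerSeries.X * T) : S = T := by
  ext n
  have h2 := congrArg (PowerSeries.coeff (n+1)) h
  rwa [PowerSeries.coeff_succ_X_mul, PowerSeries.coeff_succ_X_mul] at h2

lemma J_cancel {S T : PowerSeries A} (h : Jser * S = Jser * T) : S = T := by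
  have hXJ : ((1 : PowerSeries A) - PowerSeries.X) * Jser = PowerSeries.X := by
    rw [sub_mul, one_mul, X_mul_J, sub_sub_cancel]
  apply X_cancel (S := S) (T := T)
  calc PowerSeries.X * S = ((1 - PowerSeries.X) * Jser) * S := by rw [hXJ]
    _ = (1 - PowerSeries.X) * (Jser * S) := by rw [mul_assoc]
    _ = (1 - PowerSeries.X) * (Jser * T) := by rw [h]
    _ = ((1 - PowerSeries.X) * Jser) * T := by rw [mul_assoc]
    _ = PowerSeries.X * T := by rw [hXJ]


end Stmt11Aux

open Stmt11Aux in
theorem stmt11 {k A : Type*} [Field k] [Ring A] [Algebra k A]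
    (h e : ℕ → A) (hh0 : h 0 = 1) (he0 : e 0 = 0)
    (hhe : (Xv - Xu) * ⁅Useries h, Vseries e⁆ =
      -(Xu * Xv * (Useries h * (Useries e - Vseries e)))) :
    PowerSeries.mk (shiftCoeff (-1) e) * PowerSeries.mk h =
      PowerSeries.mk h * PowerSeries.mk e := by
  rw [Ring.lie_def] at hhe
  have hPhiU : ∀ f : ℕ → A, Phi (Useries f) = PowerSeries.mk f := by
    intro f
    have h2 := Phi_U_mul f (1 : MvPowerSeries (Fin 2) A)
    rwa [mul_one, Phi_one, mul_one] at h2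
  have hPhiV : ∀ f : ℕ → A, Phi (Vseries f) = PowerSeries.mk (sh f) := by
    intro f
    have h2 := Phi_V_mul f (1 : MvPowerSeries (Fin 2) A)
    rwa [mul_one, Phi_one, mul_one] at h2
  set K : MvPowerSeries (Fin 2) A :=
    Useries h * Vseries e - Vseries e * Useries h with hK
  set T : MvPowerSeries (Fin 2) A := Useries h * (Useries e - Vseries e) with hT
  have hPhiK : Phi K = PowerSeries.mk h * PowerSeries.mk (sh e)
      - PowerSeries.mk (sh e) * PowerSeries.mk h := by
    rw [hK, Phi_sub, Phi_U_mul, Phi_mul_U, hPhiV]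
  have hPhiT : Phi T = PowerSeries.mk h * (PowerSeries.mk e - PowerSeries.mk (sh e)) := by
    rw [hT, Phi_U_mul, Phi_sub, hPhiU, hPhiV]
  have H := congrArg Phi hhe
  rw [sub_mul, Phi_sub, ← U_delta1, ← V_delta1, Phi_V_mul, Phi_U_mul, sh_delta1,
    mk_delta1, ← Jser] at H
  rw [mul_assoc, Phi_neg, Phi_U_mul, Phi_V_mul, sh_delta1, mk_delta1, ← Jser] at H
  have key : PowerSeries.X * (Jser * Phi K) = PowerSeries.X * (Jser * (-Phi T)) := by
    calc PowerSeries.X * (Jser * Phi K)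
        = (PowerSeries.X * Jser) * Phi K := (mul_assoc _ _ _).symm
      _ = (Jser - PowerSeries.X) * Phi K := by rw [X_mul_J]
      _ = Jser * Phi K - PowerSeries.X * Phi K := sub_mul _ _ _
      _ = -(PowerSeries.X * (Jser * Phi T)) := H
      _ = PowerSeries.X * (Jser * (-Phi T)) := by rw [mul_neg, mul_neg]
  have key2 : Phi K = -Phi T := J_cancel (X_cancel key)
  rw [hPhiK, hPhiT, mul_sub, neg_sub] at key2
  have key3 : PowerSeries.mk (sh e) * PowerSeries.mk h
      = PowerSeries.mk h * PowerSeries.mk e := by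
    rw [← sub_sub_cancel (PowerSeries.mk h * PowerSeries.mk (sh e))
      (PowerSeries.mk (sh e) * PowerSeries.mk h), key2, sub_sub_cancel]
  rw [← sh_eq_shiftCoeff]
  exact key3
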